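/- Let F be a field, V and P nonsingular k×k matrices over F with P = [p_{ij}], Q = P⁻¹ = [q_{ij}], U = V·P with columns u_1,…,u_k, V̂ = (Vᵗ)⁻¹, and let δ, ε, δ', ε' ∈ F satisfy δδ' + εε' = 1 and εδ' + δε' = 0. Let X be any k×k matrix over F with columns x_1,…,x_k, set Y = δ V̂ Xᵗ U + ε X P with columns y_1,…,y_k, and let z'_a = ∑_{ℓ=1}^k q_{ℓa} y_ℓ. Then for any a, b ∈ {1,…,k}: ∑_{i ∈ {1,…,k}∖{a}} p_{ib} (v_aᵗ x_i) + (δ' + ε') p_{ab} ∑_{j ∈ {1,…,k}∖{b}} q_{ja} (v_aᵗ y_j) = δ' (u_bᵗ z'_a) + (ε' − (ε' + δ') q_{ba} p_{ab}) (v_aᵗ y_b), where v_1,…,v_k are the columns of V. -/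
import Mathlib


open Matrix Finset

/-- The exchanged packet sent from newcomer `a` to newcomer `k+b`:
`∑_{i≠a} p_{ib}(v_aᵗ x_i) + (δ'+ε') p_{ab} ∑_{j≠b} q_{ja}(v_aᵗ y_j)
  = δ' (u_bᵗ z'_a) + (ε' − (ε'+δ')q_{ba}p_{ab})(v_aᵗ y_b)`. -/
theorem dual_exchanged_packet_identity
    {F : Type*} [Field F] {k : ℕ}
    (V P : Matrix (Fin k) (Fin k) F)
    (hV : IsUnit V.det) (hP : IsUnit P.det)
    (δ ε δ' ε' : F)
    (h1 : δ * δ' + ε * ε' = 1) (h2 : ε * δ' + δ * ε' = 0)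
    (X : Matrix (Fin k) (Fin k) F)
    (Y : Matrix (Fin k) (Fin k) F)
    (hY : Y = δ • ((Vᵀ)⁻¹ * Xᵀ * (V * P)) + ε • (X * P))
    (z' : Fin k → Fin k → F)
    (hz' : ∀ j idx, z' j idx = ∑ ℓ, P⁻¹ ℓ j * Y idx ℓ) :
    ∀ a b : Fin k,
      (∑ i ∈ univ.erase a, P i b *
          ((fun idx => V idx a) ⬝ᵥ (fun idx => X idx i))) +
        (δ' + ε') * P a b *
          (∑ j ∈ univ.erase b, P⁻¹ j a *
            ((fun idx => V idx a) ⬝ᵥ (fun idx => Y idx j))) =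
      δ' * ((fun idx => (V * P) idx b) ⬝ᵥ z' a) +
        (ε' - (ε' + δ') * P⁻¹ b a * P a b) *
          ((fun idx => V idx a) ⬝ᵥ (fun idx => Y idx b)) := by
  intro a b
  haveI := V.invertibleOfIsUnitDet hV
  haveI := P.invertibleOfIsUnitDet hP
  have hPQ : P * P⁻¹ = 1 := mul_nonsing_inv P hP
  have hQP : P⁻¹ * P = 1 := nonsing_inv_mul P hP
  have hVt : IsUnit (Vᵀ).det := by rwa [det_transpose]
  haveI := (Vᵀ).invertibleOfIsUnitDet hVt
  haveI := (Pᵀ).invertibleOfIsUnitDet (by rwa [det_transpose] : IsUnit (Pᵀ).det)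
  have hVtV : (Vᵀ)⁻¹ * Vᵀ = 1 := nonsing_inv_mul _ hVt
  have hVVt : Vᵀ * (Vᵀ)⁻¹ = 1 := mul_nonsing_inv _ hVt
  -- main inversion identity
  have hM : Vᵀ * X = δ' • ((Pᵀ)⁻¹ * (Yᵀ * V)) + ε' • (Vᵀ * Y * P⁻¹) := by
    subst hY
    simp only [transpose_add, transpose_smul, transpose_mul, transpose_nonsing_inv,
      transpose_transpose, Matrix.mul_add, Matrix.add_mul, Matrix.mul_smul,
      Matrix.smul_mul, Matrix.mul_assoc,
      Matrix.inv_mul_cancel_left_of_invertible, Matrix.mul_inv_cancel_left_of_invertible,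
      Matrix.mul_inv_of_invertible, Matrix.inv_mul_of_invertible, Matrix.mul_one]
    ext i j
    simp only [Matrix.add_apply, Matrix.smul_apply, smul_eq_mul]
    linear_combination -((Vᵀ * X) i j * h1 + (Xᵀ * V) i j * h2)
  -- dot product conversions
  have dV : ∀ (M : Matrix (Fin k) (Fin k) F) (i : Fin k),
      ((fun idx => V idx a) ⬝ᵥ (fun idx => M idx i)) = (Vᵀ * M) a i := by
    intro M i
    simp [dotProduct, Matrix.mul_apply]
  have dz : ((fun idx => (V * P) idx b) ⬝ᵥ z' a) = ((V * P)ᵀ * Y * P⁻¹) b a := by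
    simp only [dotProduct, hz', Matrix.mul_apply, transpose_apply, Finset.mul_sum,
      Finset.sum_mul]
    rw [Finset.sum_comm]
    refine Finset.sum_congr rfl fun ℓ _ => Finset.sum_congr rfl fun idx _ => ?_
    exact Finset.sum_congr rfl fun x _ => by ring
  -- erase sums
  have e1 : (∑ i ∈ univ.erase a, P i b * (Vᵀ * X) a i)
      = (Vᵀ * X * P) a b - P a b * (Vᵀ * X) a a := by
    have h : (∑ i ∈ univ.erase a, P i b * (Vᵀ * X) a i) + P a b * (Vᵀ * X) a a
        = (Vᵀ * X * P) a b := by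
      rw [Finset.sum_erase_add univ _ (mem_univ a), Matrix.mul_apply]
      exact Finset.sum_congr rfl fun i _ => mul_comm _ _
    linear_combination h
  have e2 : (∑ j ∈ univ.erase b, P⁻¹ j a * (Vᵀ * Y) a j)
      = (Vᵀ * Y * P⁻¹) a a - P⁻¹ b a * (Vᵀ * Y) a b := by
    have h : (∑ j ∈ univ.erase b, P⁻¹ j a * (Vᵀ * Y) a j) + P⁻¹ b a * (Vᵀ * Y) a b
        = (Vᵀ * Y * P⁻¹) a a := by
      rw [Finset.sum_erase_add univ _ (mem_univ b), Matrix.mul_apply]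
      exact Finset.sum_congr rfl fun j _ => mul_comm _ _
    linear_combination h
  simp only [dV, dz, e1, e2]
  -- matrix entry identities from hM
  have htr1 : (Pᵀ)⁻¹ * (Yᵀ * V) * P = ((V * P)ᵀ * Y * P⁻¹)ᵀ := by
    simp [transpose_mul, transpose_nonsing_inv, transpose_transpose, Matrix.mul_assoc]
  have htr2 : (Pᵀ)⁻¹ * (Yᵀ * V) = (Vᵀ * Y * P⁻¹)ᵀ := by
    simp [transpose_mul, transpose_nonsing_inv, transpose_transpose, Matrix.mul_assoc]
  have hM1 : Vᵀ * X * P = δ' • ((V * P)ᵀ * Y * P⁻¹)ᵀ + ε' • (Vᵀ * Y) := by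
    rw [hM, Matrix.add_mul, Matrix.smul_mul, Matrix.smul_mul, htr1,
      Matrix.mul_assoc (Vᵀ * Y) P⁻¹ P, hQP, Matrix.mul_one]
  have r1 : (Vᵀ * X * P) a b = δ' * ((V * P)ᵀ * Y * P⁻¹) b a + ε' * (Vᵀ * Y) a b := by
    have h := congrFun (congrFun hM1 a) b
    simp only [Matrix.add_apply, Matrix.smul_apply, Matrix.transpose_apply, smul_eq_mul] at h
    exact h
  have hM2 : Vᵀ * X = δ' • (Vᵀ * Y * P⁻¹)ᵀ + ε' • (Vᵀ * Y * P⁻¹) := by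
    rw [hM, htr2]
  have r2 : (Vᵀ * X) a a = (δ' + ε') * (Vᵀ * Y * P⁻¹) a a := by
    have h := congrFun (congrFun hM2 a) a
    simp only [Matrix.add_apply, Matrix.smul_apply, transpose_apply, smul_eq_mul] at h
    rw [h]; ring
  linear_combination r1 - P a b * r2
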